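/- Let N, A, B, C : ℝ → ℝ be continuously differentiable and nowhere vanishing, and let W : ℝ³ → ℝ be differentiable; set V(t,x,y,z) = W(t, y·e^{x}, z·e^{x}) (a potential invariant under the Killing vector ξ¹ = ∂_x − y∂_y − z∂_z). Suppose u : ℝ⁴ → ℝ is twice continuously differentiable and satisfies the Bianchi V Klein–Gordon equation ∂_t(−(ABC/N)e^{2x}∂_t u) + ∂_x((NBC/A)e^{2x}∂_x u) + ∂_y((NAC/B)∂_y u) + ∂_z((NAB/C)∂_z u) = NABC·e^{2x}·V·u at every point. Define Q = ∂_x u − y·∂_y u − z·∂_z u and the Noether current: I^t = −(ABC/N)e^{2x}·(∂_t u)·Q, I^x = (NBC/A)e^{2x}·(∂_x u)·Q − L, I^y = (NAC/B)·(∂_y u)·Q + y·L, I^z = (NAB/C)·(∂_z u)·Q + z·L, where L = (NABC·e^{2x}/2)·(−(∂_t u)²/N² + (∂_x u)²/A² + e^{−2x}(∂_y u)²/B² + e^{−2x}(∂_z u)²/C² + V·u²). Then the conservation law ∂_t I^t + ∂_x I^x + ∂_y I^y + ∂_z I^z = 0 holds at every point. -/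

import Mathlib

noncomputable section

/-- Partial derivative of `f` in the `μ`-th coordinate direction at `p`. -/
def pd (μ : Fin 4) (f : (Fin 4 → ℝ) → ℝ) (p : Fin 4 → ℝ) : ℝ :=
  fderiv ℝ f p (Pi.single μ 1)

private lemma pd_add {f g : (Fin 4 → ℝ) → ℝ} {p : Fin 4 → ℝ}
    (hf : DifferentiableAt ℝ f p) (hg : DifferentiableAt ℝ g p) (μ : Fin 4) :
    pd μ (fun q => f q + g q) p = pd μ f p + pd μ g p := by
  unfold pd; rw [fderiv_fun_add hf hg, ContinuousLinearMap.add_apply]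

private lemma pd_sub {f g : (Fin 4 → ℝ) → ℝ} {p : Fin 4 → ℝ}
    (hf : DifferentiableAt ℝ f p) (hg : DifferentiableAt ℝ g p) (μ : Fin 4) :
    pd μ (fun q => f q - g q) p = pd μ f p - pd μ g p := by
  unfold pd; rw [fderiv_fun_sub hf hg, ContinuousLinearMap.sub_apply]

private lemma pd_mul {f g : (Fin 4 → ℝ) → ℝ} {p : Fin 4 → ℝ}
    (hf : DifferentiableAt ℝ f p) (hg : DifferentiableAt ℝ g p) (μ : Fin 4) :
    pd μ (fun q => f q * g q) p = pd μ f p * g p + f p * pd μ g p := by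
  unfold pd
  rw [fderiv_fun_mul hf hg, ContinuousLinearMap.add_apply, ContinuousLinearMap.smul_apply,
    ContinuousLinearMap.smul_apply, smul_eq_mul, smul_eq_mul]
  ring

private lemma diffAt_div_const {f : (Fin 4 → ℝ) → ℝ} {p : Fin 4 → ℝ}
    (hf : DifferentiableAt ℝ f p) (c : ℝ) :
    DifferentiableAt ℝ (fun q => f q / c) p := by
  simp only [div_eq_mul_inv]
  exact hf.mul_const _

private lemma pd_div_const {f : (Fin 4 → ℝ) → ℝ} {p : Fin 4 → ℝ}
    (hf : DifferentiableAt ℝ f p) (c : ℝ) (μ : Fin 4) :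
    pd μ (fun q => f q / c) p = pd μ f p / c := by
  unfold pd
  simp only [div_eq_mul_inv]
  rw [fderiv_mul_const hf, ContinuousLinearMap.smul_apply, smul_eq_mul]
  ring

private lemma diff_coord (i : Fin 4) : Differentiable ℝ (fun q : Fin 4 → ℝ => q i) :=
  (ContinuousLinearMap.proj (R := ℝ) (φ := fun _ : Fin 4 => ℝ) i).differentiable

private lemma pd_coord (i μ : Fin 4) (p : Fin 4 → ℝ) :
    pd μ (fun q : Fin 4 → ℝ => q i) p = if i = μ then 1 else 0 := by
  unfold pd
  rw [show (fun q : Fin 4 → ℝ => q i)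
      = (ContinuousLinearMap.proj (R := ℝ) (φ := fun _ : Fin 4 => ℝ) i) from rfl,
    ContinuousLinearMap.fderiv]
  simp [Pi.single_apply]

private lemma pd_comp0 {g : ℝ → ℝ} {p : Fin 4 → ℝ} (hg : DifferentiableAt ℝ g (p 0)) (μ : Fin 4) :
    pd μ (fun q : Fin 4 → ℝ => g (q 0)) p = (if (0 : Fin 4) = μ then 1 else 0) * deriv g (p 0) := by
  have hproj : HasFDerivAt (fun q : Fin 4 → ℝ => q 0)
      (ContinuousLinearMap.proj (R := ℝ) (φ := fun _ : Fin 4 => ℝ) 0) p :=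
    (ContinuousLinearMap.proj (R := ℝ) (φ := fun _ : Fin 4 => ℝ) 0).hasFDerivAt
  have h := hg.hasDerivAt.comp_hasFDerivAt p hproj
  unfold pd
  rw [show (fun q : Fin 4 → ℝ => g (q 0)) = g ∘ (fun q : Fin 4 → ℝ => q 0) from rfl, h.fderiv]
  simp [Pi.single_apply, mul_comm]

private lemma hasDerivAt_exp2 (x : ℝ) :
    HasDerivAt (fun s : ℝ => Real.exp (2 * s)) (2 * Real.exp (2 * x)) x := by
  simpa [mul_comm] using ((hasDerivAt_id x).const_mul 2).exp

private lemma diff_exp2 : Differentiable ℝ (fun q : Fin 4 → ℝ => Real.exp (2 * q 1)) :=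
  fun p => DifferentiableAt.exp (by exact ((diff_coord 1).const_mul 2) p)

private lemma pd_exp2 (μ : Fin 4) (p : Fin 4 → ℝ) :
    pd μ (fun q : Fin 4 → ℝ => Real.exp (2 * q 1)) p
      = (if (1 : Fin 4) = μ then 1 else 0) * (2 * Real.exp (2 * p 1)) := by
  have hproj : HasFDerivAt (fun q : Fin 4 → ℝ => q 1)
      (ContinuousLinearMap.proj (R := ℝ) (φ := fun _ : Fin 4 => ℝ) 1) p :=
    (ContinuousLinearMap.proj (R := ℝ) (φ := fun _ : Fin 4 => ℝ) 1).hasFDerivAt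
  have h := (hasDerivAt_exp2 (p 1)).comp_hasFDerivAt p hproj
  unfold pd
  rw [show (fun q : Fin 4 → ℝ => Real.exp (2 * q 1))
      = (fun s : ℝ => Real.exp (2 * s)) ∘ (fun q : Fin 4 → ℝ => q 1) from rfl, h.fderiv]
  simp [Pi.single_apply, mul_comm]


/-- The Klein-Gordon equation on the Bianchi V spacetime
`diag(−N², A², B²e^{2x}, C²e^{2x})` written in divergence form. -/
def KGBianchiV (N A B C : ℝ → ℝ) (V u : (Fin 4 → ℝ) → ℝ) : Prop :=
  ∀ p : Fin 4 → ℝ,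
    pd 0 (fun q => -(A (q 0) * B (q 0) * C (q 0) / N (q 0)) * Real.exp (2 * q 1) * pd 0 u q) p
    + pd 1 (fun q => (N (q 0) * B (q 0) * C (q 0) / A (q 0)) * Real.exp (2 * q 1) * pd 1 u q) p
    + pd 2 (fun q => (N (q 0) * A (q 0) * C (q 0) / B (q 0)) * pd 2 u q) p
    + pd 3 (fun q => (N (q 0) * A (q 0) * B (q 0) / C (q 0)) * pd 3 u q) p
    = N (p 0) * A (p 0) * B (p 0) * C (p 0) * Real.exp (2 * p 1) * V p * u p

set_option maxHeartbeats 4000000 in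
/-- for a potential `V(t,x,y,z) = W(t, ye^{x}, ze^{x})` invariant under the
Killing vector `ξ¹ = ∂_x − y∂_y − z∂_z` and a solution `u` of the Bianchi V Klein-Gordon
equation, the associated Noether current is conserved:
`∂_t I^t + ∂_x I^x + ∂_y I^y + ∂_z I^z = 0`. -/
theorem bianchiV_noether_conservation
    (N A B C : ℝ → ℝ)
    (hN : ContDiff ℝ 1 N) (hA : ContDiff ℝ 1 A)
    (hB : ContDiff ℝ 1 B) (hC : ContDiff ℝ 1 C)
    (hN0 : ∀ t, N t ≠ 0) (hA0 : ∀ t, A t ≠ 0)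
    (hB0 : ∀ t, B t ≠ 0) (hC0 : ∀ t, C t ≠ 0)
    (W : (Fin 3 → ℝ) → ℝ) (hW : Differentiable ℝ W)
    (V : (Fin 4 → ℝ) → ℝ)
    (hV : V = fun p => W ![p 0, p 2 * Real.exp (p 1), p 3 * Real.exp (p 1)])
    (u : (Fin 4 → ℝ) → ℝ) (hu : ContDiff ℝ 2 u)
    (hKG : KGBianchiV N A B C V u)
    (Q : (Fin 4 → ℝ) → ℝ)
    (hQ : Q = fun p => pd 1 u p - p 2 * pd 2 u p - p 3 * pd 3 u p)
    (L It Ix Iy Iz : (Fin 4 → ℝ) → ℝ)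
    (hL : L = fun p => (N (p 0) * A (p 0) * B (p 0) * C (p 0) * Real.exp (2 * p 1) / 2) *
      (-(pd 0 u p) ^ 2 / (N (p 0)) ^ 2 + (pd 1 u p) ^ 2 / (A (p 0)) ^ 2
        + Real.exp (-2 * p 1) * (pd 2 u p) ^ 2 / (B (p 0)) ^ 2
        + Real.exp (-2 * p 1) * (pd 3 u p) ^ 2 / (C (p 0)) ^ 2
        + V p * (u p) ^ 2))
    (hIt : It = fun p =>
      -(A (p 0) * B (p 0) * C (p 0) / N (p 0)) * Real.exp (2 * p 1) * pd 0 u p * Q p)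
    (hIx : Ix = fun p =>
      (N (p 0) * B (p 0) * C (p 0) / A (p 0)) * Real.exp (2 * p 1) * pd 1 u p * Q p - L p)
    (hIy : Iy = fun p =>
      (N (p 0) * A (p 0) * C (p 0) / B (p 0)) * pd 2 u p * Q p + p 2 * L p)
    (hIz : Iz = fun p =>
      (N (p 0) * A (p 0) * B (p 0) / C (p 0)) * pd 3 u p * Q p + p 3 * L p) :
    ∀ p : Fin 4 → ℝ, pd 0 It p + pd 1 Ix p + pd 2 Iy p + pd 3 Iz p = 0 := by
  intro p
  have hNd : Differentiable ℝ N := hN.differentiable one_ne_zero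
  have hAd : Differentiable ℝ A := hA.differentiable one_ne_zero
  have hBd : Differentiable ℝ B := hB.differentiable one_ne_zero
  have hCd : Differentiable ℝ C := hC.differentiable one_ne_zero
  have dc0 : DifferentiableAt ℝ (fun s => -(A s * B s * C s / N s)) (p 0) :=
    ((((hAd (p 0)).mul (hBd (p 0))).mul (hCd (p 0))).div (hNd (p 0)) (hN0 (p 0))).neg
  have dc1 : DifferentiableAt ℝ (fun s => N s * B s * C s / A s) (p 0) :=
    (((hNd (p 0)).mul (hBd (p 0))).mul (hCd (p 0))).div (hAd (p 0)) (hA0 (p 0))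
  have dc2 : DifferentiableAt ℝ (fun s => N s * A s * C s / B s) (p 0) :=
    (((hNd (p 0)).mul (hAd (p 0))).mul (hCd (p 0))).div (hBd (p 0)) (hB0 (p 0))
  have dc3 : DifferentiableAt ℝ (fun s => N s * A s * B s / C s) (p 0) :=
    (((hNd (p 0)).mul (hAd (p 0))).mul (hBd (p 0))).div (hCd (p 0)) (hC0 (p 0))
  have dcS : DifferentiableAt ℝ (fun s => N s * A s * B s * C s) (p 0) :=
    (((hNd (p 0)).mul (hAd (p 0))).mul (hBd (p 0))).mul (hCd (p 0))
  have dl0 : DifferentiableAt ℝ (fun q : Fin 4 → ℝ => -(A (q 0) * B (q 0) * C (q 0) / N (q 0))) p :=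
    dc0.comp (g := fun s => -(A s * B s * C s / N s)) p (diff_coord 0 p)
  have dl1 : DifferentiableAt ℝ (fun q : Fin 4 → ℝ => N (q 0) * B (q 0) * C (q 0) / A (q 0)) p :=
    dc1.comp (g := fun s => N s * B s * C s / A s) p (diff_coord 0 p)
  have dl2 : DifferentiableAt ℝ (fun q : Fin 4 → ℝ => N (q 0) * A (q 0) * C (q 0) / B (q 0)) p :=
    dc2.comp (g := fun s => N s * A s * C s / B s) p (diff_coord 0 p)
  have dl3 : DifferentiableAt ℝ (fun q : Fin 4 → ℝ => N (q 0) * A (q 0) * B (q 0) / C (q 0)) p :=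
    dc3.comp (g := fun s => N s * A s * B s / C s) p (diff_coord 0 p)
  have dlS : DifferentiableAt ℝ (fun q : Fin 4 → ℝ => N (q 0) * A (q 0) * B (q 0) * C (q 0)) p :=
    dcS.comp (g := fun s => N s * A s * B s * C s) p (diff_coord 0 p)
  have dE : DifferentiableAt ℝ (fun q : Fin 4 → ℝ => Real.exp (2 * q 1)) p := diff_exp2 p
  have hudF : Differentiable ℝ (fderiv ℝ u) :=
    (hu.fderiv_right (m := 1) le_rfl).differentiable one_ne_zero
  have hpdu : ∀ j : Fin 4, Differentiable ℝ (fun q => pd j u q) := by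
    intro j
    exact hudF.clm_apply (differentiable_const _)
  have du : DifferentiableAt ℝ u p := (hu.differentiable two_ne_zero) p
  have hsymkey : ∀ i j : Fin 4, pd i (fun q => pd j u q) p
      = fderiv ℝ (fderiv ℝ u) p (Pi.single i 1) (Pi.single j 1) := by
    intro i j
    unfold pd
    rw [fderiv_clm_apply (hudF p) (differentiableAt_const _)]
    simp
  have hsym : ∀ i j : Fin 4, pd i (fun q => pd j u q) p = pd j (fun q => pd i u q) p := by
    intro i j
    rw [hsymkey i j, hsymkey j i]
    exact (hu.contDiffAt.isSymmSndFDerivAt (by norm_num)) _ _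
  have hVblock : DifferentiableAt ℝ V p ∧ pd 1 V p = p 2 * pd 2 V p + p 3 * pd 3 V p := by
    set φ : (Fin 4 → ℝ) → (Fin 3 → ℝ) :=
      fun q => ![q 0, q 2 * Real.exp (q 1), q 3 * Real.exp (q 1)] with hφ
    set pr : Fin 4 → (Fin 4 → ℝ) →L[ℝ] ℝ :=
      fun i => ContinuousLinearMap.proj (R := ℝ) (φ := fun _ : Fin 4 => ℝ) i with hpr
    have hexp : HasFDerivAt (fun q : Fin 4 → ℝ => Real.exp (q 1))
        (Real.exp (p 1) • pr 1) p :=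
      (Real.hasDerivAt_exp (p 1)).comp_hasFDerivAt (f := fun q : Fin 4 → ℝ => q 1) p ((pr 1).hasFDerivAt)
    have h2 : HasFDerivAt (fun q : Fin 4 → ℝ => q 2 * Real.exp (q 1))
        (p 2 • (Real.exp (p 1) • pr 1) + Real.exp (p 1) • pr 2) p :=
      HasFDerivAt.mul ((pr 2).hasFDerivAt) hexp
    have h3 : HasFDerivAt (fun q : Fin 4 → ℝ => q 3 * Real.exp (q 1))
        (p 3 • (Real.exp (p 1) • pr 1) + Real.exp (p 1) • pr 3) p :=
      HasFDerivAt.mul ((pr 3).hasFDerivAt) hexp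
    set D : Fin 3 → (Fin 4 → ℝ) →L[ℝ] ℝ :=
      ![pr 0, p 2 • (Real.exp (p 1) • pr 1) + Real.exp (p 1) • pr 2,
        p 3 • (Real.exp (p 1) • pr 1) + Real.exp (p 1) • pr 3] with hD
    have hφd : HasFDerivAt φ (ContinuousLinearMap.pi D) p := by
      apply hasFDerivAt_pi.2
      intro i
      fin_cases i
      · exact (pr 0).hasFDerivAt
      · simpa [hφ, hD] using h2
      · simpa [hφ, hD] using h3
    have hVd : HasFDerivAt V ((fderiv ℝ W (φ p)).comp (ContinuousLinearMap.pi D)) p := by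
      rw [hV]
      exact (hW (φ p)).hasFDerivAt.comp p hφd
    refine ⟨hVd.differentiableAt, ?_⟩
    have hpdV : ∀ μ : Fin 4, pd μ V p
        = fderiv ℝ W (φ p) (ContinuousLinearMap.pi D (Pi.single μ 1)) := by
      intro μ
      unfold pd
      rw [hVd.fderiv]
      rfl
    rw [hpdV 1, hpdV 2, hpdV 3]
    have hlin : ContinuousLinearMap.pi D (Pi.single (1 : Fin 4) (1:ℝ))
        = p 2 • ContinuousLinearMap.pi D (Pi.single (2 : Fin 4) (1:ℝ))
          + p 3 • ContinuousLinearMap.pi D (Pi.single (3 : Fin 4) (1:ℝ)) := by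
      funext i
      fin_cases i <;>
        simp (config := { decide := true }) [hD, hpr, ContinuousLinearMap.proj_apply,
          Pi.single_apply] <;> ring
    rw [hlin, map_add, map_smul, map_smul]
    simp
  have dV : DifferentiableAt ℝ V p := hVblock.1
  have hVinv : pd 1 V p = p 2 * pd 2 V p + p 3 * pd 3 V p := hVblock.2
  have dQ : DifferentiableAt ℝ Q p := by
    rw [hQ]
    exact (((hpdu 1 p).sub ((diff_coord 2 p).mul (hpdu 2 p))).sub
      ((diff_coord 3 p).mul (hpdu 3 p)))
  have hL2 : L = fun q : Fin 4 → ℝ => (-(A (q 0) * B (q 0) * C (q 0) / N (q 0)) * Real.exp (2 * q 1) * (pd 0 u q * pd 0 u q) + N (q 0) * B (q 0) * C (q 0) / A (q 0) * Real.exp (2 * q 1) * (pd 1 u q * pd 1 u q) + N (q 0) * A (q 0) * C (q 0) / B (q 0) * (pd 2 u q * pd 2 u q) + N (q 0) * A (q 0) * B (q 0) / C (q 0) * (pd 3 u q * pd 3 u q) + N (q 0) * A (q 0) * B (q 0) * C (q 0) * Real.exp (2 * q 1) * V q * (u q * u q)) / 2 := by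
    rw [hL]
    funext q
    rw [neg_mul, Real.exp_neg]
    have h1 := hN0 (q 0); have h2 := hA0 (q 0); have h3 := hB0 (q 0); have h4 := hC0 (q 0)
    have h5 := Real.exp_ne_zero (2 * q 1)
    field_simp
  have dsq0 : DifferentiableAt ℝ (fun q : Fin 4 → ℝ => pd 0 u q * pd 0 u q) p := (hpdu 0 p).mul (hpdu 0 p)
  have dsq1 : DifferentiableAt ℝ (fun q : Fin 4 → ℝ => pd 1 u q * pd 1 u q) p := (hpdu 1 p).mul (hpdu 1 p)
  have dsq2 : DifferentiableAt ℝ (fun q : Fin 4 → ℝ => pd 2 u q * pd 2 u q) p := (hpdu 2 p).mul (hpdu 2 p)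
  have dsq3 : DifferentiableAt ℝ (fun q : Fin 4 → ℝ => pd 3 u q * pd 3 u q) p := (hpdu 3 p).mul (hpdu 3 p)
  have duu : DifferentiableAt ℝ (fun q : Fin 4 → ℝ => u q * u q) p := du.mul du
  have dc0E : DifferentiableAt ℝ (fun q : Fin 4 → ℝ => -(A (q 0) * B (q 0) * C (q 0) / N (q 0)) * Real.exp (2 * q 1)) p := dl0.mul dE
  have dc1E : DifferentiableAt ℝ (fun q : Fin 4 → ℝ => N (q 0) * B (q 0) * C (q 0) / A (q 0) * Real.exp (2 * q 1)) p := dl1.mul dE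
  have dcSE : DifferentiableAt ℝ (fun q : Fin 4 → ℝ => N (q 0) * A (q 0) * B (q 0) * C (q 0) * Real.exp (2 * q 1)) p := dlS.mul dE
  have dT1 : DifferentiableAt ℝ (fun q : Fin 4 → ℝ => -(A (q 0) * B (q 0) * C (q 0) / N (q 0)) * Real.exp (2 * q 1) * (pd 0 u q * pd 0 u q)) p := dc0E.mul dsq0
  have dT2 : DifferentiableAt ℝ (fun q : Fin 4 → ℝ => N (q 0) * B (q 0) * C (q 0) / A (q 0) * Real.exp (2 * q 1) * (pd 1 u q * pd 1 u q)) p := dc1E.mul dsq1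
  have dT3 : DifferentiableAt ℝ (fun q : Fin 4 → ℝ => N (q 0) * A (q 0) * C (q 0) / B (q 0) * (pd 2 u q * pd 2 u q)) p := dl2.mul dsq2
  have dT4 : DifferentiableAt ℝ (fun q : Fin 4 → ℝ => N (q 0) * A (q 0) * B (q 0) / C (q 0) * (pd 3 u q * pd 3 u q)) p := dl3.mul dsq3
  have dcSEV : DifferentiableAt ℝ (fun q : Fin 4 → ℝ => N (q 0) * A (q 0) * B (q 0) * C (q 0) * Real.exp (2 * q 1) * V q) p := dcSE.mul dV
  have dT5 : DifferentiableAt ℝ (fun q : Fin 4 → ℝ => N (q 0) * A (q 0) * B (q 0) * C (q 0) * Real.exp (2 * q 1) * V q * (u q * u q)) p := dcSEV.mul duu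
  have dS12 : DifferentiableAt ℝ (fun q : Fin 4 → ℝ => -(A (q 0) * B (q 0) * C (q 0) / N (q 0)) * Real.exp (2 * q 1) * (pd 0 u q * pd 0 u q) + N (q 0) * B (q 0) * C (q 0) / A (q 0) * Real.exp (2 * q 1) * (pd 1 u q * pd 1 u q)) p := dT1.add dT2
  have dS123 : DifferentiableAt ℝ (fun q : Fin 4 → ℝ => -(A (q 0) * B (q 0) * C (q 0) / N (q 0)) * Real.exp (2 * q 1) * (pd 0 u q * pd 0 u q) + N (q 0) * B (q 0) * C (q 0) / A (q 0) * Real.exp (2 * q 1) * (pd 1 u q * pd 1 u q) + N (q 0) * A (q 0) * C (q 0) / B (q 0) * (pd 2 u q * pd 2 u q)) p := dS12.add dT3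
  have dS1234 : DifferentiableAt ℝ (fun q : Fin 4 → ℝ => -(A (q 0) * B (q 0) * C (q 0) / N (q 0)) * Real.exp (2 * q 1) * (pd 0 u q * pd 0 u q) + N (q 0) * B (q 0) * C (q 0) / A (q 0) * Real.exp (2 * q 1) * (pd 1 u q * pd 1 u q) + N (q 0) * A (q 0) * C (q 0) / B (q 0) * (pd 2 u q * pd 2 u q) + N (q 0) * A (q 0) * B (q 0) / C (q 0) * (pd 3 u q * pd 3 u q)) p := dS123.add dT4
  have dS12345 : DifferentiableAt ℝ (fun q : Fin 4 → ℝ => -(A (q 0) * B (q 0) * C (q 0) / N (q 0)) * Real.exp (2 * q 1) * (pd 0 u q * pd 0 u q) + N (q 0) * B (q 0) * C (q 0) / A (q 0) * Real.exp (2 * q 1) * (pd 1 u q * pd 1 u q) + N (q 0) * A (q 0) * C (q 0) / B (q 0) * (pd 2 u q * pd 2 u q) + N (q 0) * A (q 0) * B (q 0) / C (q 0) * (pd 3 u q * pd 3 u q) + N (q 0) * A (q 0) * B (q 0) * C (q 0) * Real.exp (2 * q 1) * V q * (u q * u q)) p := dS1234.add dT5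
  have dL : DifferentiableAt ℝ L p := by rw [hL2]; exact diffAt_div_const dS12345 2
  have dK0 : DifferentiableAt ℝ (fun q : Fin 4 → ℝ => -(A (q 0) * B (q 0) * C (q 0) / N (q 0)) * Real.exp (2 * q 1) * pd 0 u q) p := dc0E.mul (hpdu 0 p)
  have dK1 : DifferentiableAt ℝ (fun q : Fin 4 → ℝ => (N (q 0) * B (q 0) * C (q 0) / A (q 0)) * Real.exp (2 * q 1) * pd 1 u q) p := dc1E.mul (hpdu 1 p)
  have dK2 : DifferentiableAt ℝ (fun q : Fin 4 → ℝ => (N (q 0) * A (q 0) * C (q 0) / B (q 0)) * pd 2 u q) p := dl2.mul (hpdu 2 p)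
  have dK3 : DifferentiableAt ℝ (fun q : Fin 4 → ℝ => (N (q 0) * A (q 0) * B (q 0) / C (q 0)) * pd 3 u q) p := dl3.mul (hpdu 3 p)
  have hpdc0 : ∀ μ : Fin 4, pd μ (fun q : Fin 4 → ℝ => -(A (q 0) * B (q 0) * C (q 0) / N (q 0))) p
      = (if (0 : Fin 4) = μ then 1 else 0) * deriv (fun s => -(A s * B s * C s / N s)) (p 0) :=
    fun μ => pd_comp0 dc0 μ
  have hpdc1 : ∀ μ : Fin 4, pd μ (fun q : Fin 4 → ℝ => N (q 0) * B (q 0) * C (q 0) / A (q 0)) p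
      = (if (0 : Fin 4) = μ then 1 else 0) * deriv (fun s => N s * B s * C s / A s) (p 0) :=
    fun μ => pd_comp0 dc1 μ
  have hpdc2 : ∀ μ : Fin 4, pd μ (fun q : Fin 4 → ℝ => N (q 0) * A (q 0) * C (q 0) / B (q 0)) p
      = (if (0 : Fin 4) = μ then 1 else 0) * deriv (fun s => N s * A s * C s / B s) (p 0) :=
    fun μ => pd_comp0 dc2 μ
  have hpdc3 : ∀ μ : Fin 4, pd μ (fun q : Fin 4 → ℝ => N (q 0) * A (q 0) * B (q 0) / C (q 0)) p
      = (if (0 : Fin 4) = μ then 1 else 0) * deriv (fun s => N s * A s * B s / C s) (p 0) :=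
    fun μ => pd_comp0 dc3 μ
  have hpdcS : ∀ μ : Fin 4, pd μ (fun q : Fin 4 → ℝ => N (q 0) * A (q 0) * B (q 0) * C (q 0)) p
      = (if (0 : Fin 4) = μ then 1 else 0) * deriv (fun s => N s * A s * B s * C s) (p 0) :=
    fun μ => pd_comp0 dcS μ
  have hpdsq0 : ∀ μ : Fin 4, pd μ (fun q : Fin 4 → ℝ => pd 0 u q * pd 0 u q) p
      = pd μ (fun q : Fin 4 → ℝ => pd 0 u q) p * pd 0 u p
        + pd 0 u p * pd μ (fun q : Fin 4 → ℝ => pd 0 u q) p :=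
    fun μ => pd_mul (hpdu 0 p) (hpdu 0 p) μ
  have hpdsq1 : ∀ μ : Fin 4, pd μ (fun q : Fin 4 → ℝ => pd 1 u q * pd 1 u q) p
      = pd μ (fun q : Fin 4 → ℝ => pd 1 u q) p * pd 1 u p
        + pd 1 u p * pd μ (fun q : Fin 4 → ℝ => pd 1 u q) p :=
    fun μ => pd_mul (hpdu 1 p) (hpdu 1 p) μ
  have hpdsq2 : ∀ μ : Fin 4, pd μ (fun q : Fin 4 → ℝ => pd 2 u q * pd 2 u q) p
      = pd μ (fun q : Fin 4 → ℝ => pd 2 u q) p * pd 2 u p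
        + pd 2 u p * pd μ (fun q : Fin 4 → ℝ => pd 2 u q) p :=
    fun μ => pd_mul (hpdu 2 p) (hpdu 2 p) μ
  have hpdsq3 : ∀ μ : Fin 4, pd μ (fun q : Fin 4 → ℝ => pd 3 u q * pd 3 u q) p
      = pd μ (fun q : Fin 4 → ℝ => pd 3 u q) p * pd 3 u p
        + pd 3 u p * pd μ (fun q : Fin 4 → ℝ => pd 3 u q) p :=
    fun μ => pd_mul (hpdu 3 p) (hpdu 3 p) μ
  have hpduu : ∀ μ : Fin 4, pd μ (fun q : Fin 4 → ℝ => u q * u q) p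
      = pd μ u p * u p + u p * pd μ u p :=
    fun μ => pd_mul du du μ
  have hpdc0E : ∀ μ : Fin 4, pd μ (fun q : Fin 4 → ℝ => -(A (q 0) * B (q 0) * C (q 0) / N (q 0)) * Real.exp (2 * q 1)) p
      = pd μ (fun q : Fin 4 → ℝ => -(A (q 0) * B (q 0) * C (q 0) / N (q 0))) p * Real.exp (2 * p 1)
        + (-(A (p 0) * B (p 0) * C (p 0) / N (p 0))) * pd μ (fun q : Fin 4 → ℝ => Real.exp (2 * q 1)) p :=
    fun μ => pd_mul dl0 dE μ
  have hpdc1E : ∀ μ : Fin 4, pd μ (fun q : Fin 4 → ℝ => N (q 0) * B (q 0) * C (q 0) / A (q 0) * Real.exp (2 * q 1)) p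
      = pd μ (fun q : Fin 4 → ℝ => N (q 0) * B (q 0) * C (q 0) / A (q 0)) p * Real.exp (2 * p 1)
        + (N (p 0) * B (p 0) * C (p 0) / A (p 0)) * pd μ (fun q : Fin 4 → ℝ => Real.exp (2 * q 1)) p :=
    fun μ => pd_mul dl1 dE μ
  have hpdcSE : ∀ μ : Fin 4, pd μ (fun q : Fin 4 → ℝ => N (q 0) * A (q 0) * B (q 0) * C (q 0) * Real.exp (2 * q 1)) p
      = pd μ (fun q : Fin 4 → ℝ => N (q 0) * A (q 0) * B (q 0) * C (q 0)) p * Real.exp (2 * p 1)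
        + (N (p 0) * A (p 0) * B (p 0) * C (p 0)) * pd μ (fun q : Fin 4 → ℝ => Real.exp (2 * q 1)) p :=
    fun μ => pd_mul dlS dE μ
  have hpdT1 : ∀ μ : Fin 4, pd μ (fun q : Fin 4 → ℝ => -(A (q 0) * B (q 0) * C (q 0) / N (q 0)) * Real.exp (2 * q 1) * (pd 0 u q * pd 0 u q)) p
      = pd μ (fun q : Fin 4 → ℝ => -(A (q 0) * B (q 0) * C (q 0) / N (q 0)) * Real.exp (2 * q 1)) p * (pd 0 u p * pd 0 u p)
        + (-(A (p 0) * B (p 0) * C (p 0) / N (p 0)) * Real.exp (2 * p 1)) * pd μ (fun q : Fin 4 → ℝ => (pd 0 u q * pd 0 u q)) p :=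
    fun μ => pd_mul dc0E dsq0 μ
  have hpdT2 : ∀ μ : Fin 4, pd μ (fun q : Fin 4 → ℝ => N (q 0) * B (q 0) * C (q 0) / A (q 0) * Real.exp (2 * q 1) * (pd 1 u q * pd 1 u q)) p
      = pd μ (fun q : Fin 4 → ℝ => N (q 0) * B (q 0) * C (q 0) / A (q 0) * Real.exp (2 * q 1)) p * (pd 1 u p * pd 1 u p)
        + (N (p 0) * B (p 0) * C (p 0) / A (p 0) * Real.exp (2 * p 1)) * pd μ (fun q : Fin 4 → ℝ => (pd 1 u q * pd 1 u q)) p :=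
    fun μ => pd_mul dc1E dsq1 μ
  have hpdT3 : ∀ μ : Fin 4, pd μ (fun q : Fin 4 → ℝ => N (q 0) * A (q 0) * C (q 0) / B (q 0) * (pd 2 u q * pd 2 u q)) p
      = pd μ (fun q : Fin 4 → ℝ => N (q 0) * A (q 0) * C (q 0) / B (q 0)) p * (pd 2 u p * pd 2 u p)
        + (N (p 0) * A (p 0) * C (p 0) / B (p 0)) * pd μ (fun q : Fin 4 → ℝ => (pd 2 u q * pd 2 u q)) p :=
    fun μ => pd_mul dl2 dsq2 μ
  have hpdT4 : ∀ μ : Fin 4, pd μ (fun q : Fin 4 → ℝ => N (q 0) * A (q 0) * B (q 0) / C (q 0) * (pd 3 u q * pd 3 u q)) p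
      = pd μ (fun q : Fin 4 → ℝ => N (q 0) * A (q 0) * B (q 0) / C (q 0)) p * (pd 3 u p * pd 3 u p)
        + (N (p 0) * A (p 0) * B (p 0) / C (p 0)) * pd μ (fun q : Fin 4 → ℝ => (pd 3 u q * pd 3 u q)) p :=
    fun μ => pd_mul dl3 dsq3 μ
  have hpdcSEV : ∀ μ : Fin 4, pd μ (fun q : Fin 4 → ℝ => N (q 0) * A (q 0) * B (q 0) * C (q 0) * Real.exp (2 * q 1) * V q) p
      = pd μ (fun q : Fin 4 → ℝ => N (q 0) * A (q 0) * B (q 0) * C (q 0) * Real.exp (2 * q 1)) p * V p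
        + (N (p 0) * A (p 0) * B (p 0) * C (p 0) * Real.exp (2 * p 1)) * pd μ V p :=
    fun μ => pd_mul dcSE dV μ
  have hpdT5 : ∀ μ : Fin 4, pd μ (fun q : Fin 4 → ℝ => N (q 0) * A (q 0) * B (q 0) * C (q 0) * Real.exp (2 * q 1) * V q * (u q * u q)) p
      = pd μ (fun q : Fin 4 → ℝ => N (q 0) * A (q 0) * B (q 0) * C (q 0) * Real.exp (2 * q 1) * V q) p * (u p * u p)
        + (N (p 0) * A (p 0) * B (p 0) * C (p 0) * Real.exp (2 * p 1) * V p) * pd μ (fun q : Fin 4 → ℝ => u q * u q) p :=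
    fun μ => pd_mul dcSEV duu μ
  have hpdS12 : ∀ μ : Fin 4, pd μ (fun q : Fin 4 → ℝ => -(A (q 0) * B (q 0) * C (q 0) / N (q 0)) * Real.exp (2 * q 1) * (pd 0 u q * pd 0 u q) + N (q 0) * B (q 0) * C (q 0) / A (q 0) * Real.exp (2 * q 1) * (pd 1 u q * pd 1 u q)) p
      = pd μ (fun q : Fin 4 → ℝ => -(A (q 0) * B (q 0) * C (q 0) / N (q 0)) * Real.exp (2 * q 1) * (pd 0 u q * pd 0 u q)) p + pd μ (fun q : Fin 4 → ℝ => N (q 0) * B (q 0) * C (q 0) / A (q 0) * Real.exp (2 * q 1) * (pd 1 u q * pd 1 u q)) p :=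
    fun μ => pd_add dT1 dT2 μ
  have hpdS123 : ∀ μ : Fin 4, pd μ (fun q : Fin 4 → ℝ => -(A (q 0) * B (q 0) * C (q 0) / N (q 0)) * Real.exp (2 * q 1) * (pd 0 u q * pd 0 u q) + N (q 0) * B (q 0) * C (q 0) / A (q 0) * Real.exp (2 * q 1) * (pd 1 u q * pd 1 u q) + N (q 0) * A (q 0) * C (q 0) / B (q 0) * (pd 2 u q * pd 2 u q)) p
      = pd μ (fun q : Fin 4 → ℝ => -(A (q 0) * B (q 0) * C (q 0) / N (q 0)) * Real.exp (2 * q 1) * (pd 0 u q * pd 0 u q) + N (q 0) * B (q 0) * C (q 0) / A (q 0) * Real.exp (2 * q 1) * (pd 1 u q * pd 1 u q)) p + pd μ (fun q : Fin 4 → ℝ => N (q 0) * A (q 0) * C (q 0) / B (q 0) * (pd 2 u q * pd 2 u q)) p :=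
    fun μ => pd_add dS12 dT3 μ
  have hpdS1234 : ∀ μ : Fin 4, pd μ (fun q : Fin 4 → ℝ => -(A (q 0) * B (q 0) * C (q 0) / N (q 0)) * Real.exp (2 * q 1) * (pd 0 u q * pd 0 u q) + N (q 0) * B (q 0) * C (q 0) / A (q 0) * Real.exp (2 * q 1) * (pd 1 u q * pd 1 u q) + N (q 0) * A (q 0) * C (q 0) / B (q 0) * (pd 2 u q * pd 2 u q) + N (q 0) * A (q 0) * B (q 0) / C (q 0) * (pd 3 u q * pd 3 u q)) p
      = pd μ (fun q : Fin 4 → ℝ => -(A (q 0) * B (q 0) * C (q 0) / N (q 0)) * Real.exp (2 * q 1) * (pd 0 u q * pd 0 u q) + N (q 0) * B (q 0) * C (q 0) / A (q 0) * Real.exp (2 * q 1) * (pd 1 u q * pd 1 u q) + N (q 0) * A (q 0) * C (q 0) / B (q 0) * (pd 2 u q * pd 2 u q)) p + pd μ (fun q : Fin 4 → ℝ => N (q 0) * A (q 0) * B (q 0) / C (q 0) * (pd 3 u q * pd 3 u q)) p :=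
    fun μ => pd_add dS123 dT4 μ
  have hpdS12345 : ∀ μ : Fin 4, pd μ (fun q : Fin 4 → ℝ => -(A (q 0) * B (q 0) * C (q 0) / N (q 0)) * Real.exp (2 * q 1) * (pd 0 u q * pd 0 u q) + N (q 0) * B (q 0) * C (q 0) / A (q 0) * Real.exp (2 * q 1) * (pd 1 u q * pd 1 u q) + N (q 0) * A (q 0) * C (q 0) / B (q 0) * (pd 2 u q * pd 2 u q) + N (q 0) * A (q 0) * B (q 0) / C (q 0) * (pd 3 u q * pd 3 u q) + N (q 0) * A (q 0) * B (q 0) * C (q 0) * Real.exp (2 * q 1) * V q * (u q * u q)) p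
      = pd μ (fun q : Fin 4 → ℝ => -(A (q 0) * B (q 0) * C (q 0) / N (q 0)) * Real.exp (2 * q 1) * (pd 0 u q * pd 0 u q) + N (q 0) * B (q 0) * C (q 0) / A (q 0) * Real.exp (2 * q 1) * (pd 1 u q * pd 1 u q) + N (q 0) * A (q 0) * C (q 0) / B (q 0) * (pd 2 u q * pd 2 u q) + N (q 0) * A (q 0) * B (q 0) / C (q 0) * (pd 3 u q * pd 3 u q)) p + pd μ (fun q : Fin 4 → ℝ => N (q 0) * A (q 0) * B (q 0) * C (q 0) * Real.exp (2 * q 1) * V q * (u q * u q)) p :=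
    fun μ => pd_add dS1234 dT5 μ
  have hpdLp : ∀ μ : Fin 4, pd μ (fun q : Fin 4 → ℝ => (-(A (q 0) * B (q 0) * C (q 0) / N (q 0)) * Real.exp (2 * q 1) * (pd 0 u q * pd 0 u q) + N (q 0) * B (q 0) * C (q 0) / A (q 0) * Real.exp (2 * q 1) * (pd 1 u q * pd 1 u q) + N (q 0) * A (q 0) * C (q 0) / B (q 0) * (pd 2 u q * pd 2 u q) + N (q 0) * A (q 0) * B (q 0) / C (q 0) * (pd 3 u q * pd 3 u q) + N (q 0) * A (q 0) * B (q 0) * C (q 0) * Real.exp (2 * q 1) * V q * (u q * u q)) / 2) p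
      = pd μ (fun q : Fin 4 → ℝ => -(A (q 0) * B (q 0) * C (q 0) / N (q 0)) * Real.exp (2 * q 1) * (pd 0 u q * pd 0 u q) + N (q 0) * B (q 0) * C (q 0) / A (q 0) * Real.exp (2 * q 1) * (pd 1 u q * pd 1 u q) + N (q 0) * A (q 0) * C (q 0) / B (q 0) * (pd 2 u q * pd 2 u q) + N (q 0) * A (q 0) * B (q 0) / C (q 0) * (pd 3 u q * pd 3 u q) + N (q 0) * A (q 0) * B (q 0) * C (q 0) * Real.exp (2 * q 1) * V q * (u q * u q)) p / 2 :=
    fun μ => pd_div_const dS12345 2 μ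
  have hLpd : ∀ μ : Fin 4, pd μ L p = pd μ (fun q : Fin 4 → ℝ => (-(A (q 0) * B (q 0) * C (q 0) / N (q 0)) * Real.exp (2 * q 1) * (pd 0 u q * pd 0 u q) + N (q 0) * B (q 0) * C (q 0) / A (q 0) * Real.exp (2 * q 1) * (pd 1 u q * pd 1 u q) + N (q 0) * A (q 0) * C (q 0) / B (q 0) * (pd 2 u q * pd 2 u q) + N (q 0) * A (q 0) * B (q 0) / C (q 0) * (pd 3 u q * pd 3 u q) + N (q 0) * A (q 0) * B (q 0) * C (q 0) * Real.exp (2 * q 1) * V q * (u q * u q)) / 2) p := by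
    intro μ
    rw [hL2]
  have hLval : L p = (-(A (p 0) * B (p 0) * C (p 0) / N (p 0)) * Real.exp (2 * p 1) * (pd 0 u p * pd 0 u p) + N (p 0) * B (p 0) * C (p 0) / A (p 0) * Real.exp (2 * p 1) * (pd 1 u p * pd 1 u p) + N (p 0) * A (p 0) * C (p 0) / B (p 0) * (pd 2 u p * pd 2 u p) + N (p 0) * A (p 0) * B (p 0) / C (p 0) * (pd 3 u p * pd 3 u p) + N (p 0) * A (p 0) * B (p 0) * C (p 0) * Real.exp (2 * p 1) * V p * (u p * u p)) / 2 := by rw [hL2]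
  have hQs1 : ∀ μ : Fin 4, pd μ Q p
      = pd μ (fun q : Fin 4 → ℝ => pd 1 u q - q 2 * pd 2 u q) p
        - pd μ (fun q : Fin 4 → ℝ => q 3 * pd 3 u q) p := by
    intro μ
    rw [hQ]
    exact pd_sub ((hpdu 1 p).sub ((diff_coord 2 p).mul (hpdu 2 p)))
      ((diff_coord 3 p).mul (hpdu 3 p)) μ
  have hQs2 : ∀ μ : Fin 4, pd μ (fun q : Fin 4 → ℝ => pd 1 u q - q 2 * pd 2 u q) p
      = pd μ (fun q : Fin 4 → ℝ => pd 1 u q) p - pd μ (fun q : Fin 4 → ℝ => q 2 * pd 2 u q) p :=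
    fun μ => pd_sub (hpdu 1 p) ((diff_coord 2 p).mul (hpdu 2 p)) μ
  have hq2l : ∀ μ : Fin 4, pd μ (fun q : Fin 4 → ℝ => q 2 * pd 2 u q) p
      = pd μ (fun q : Fin 4 → ℝ => q 2) p * pd 2 u p + p 2 * pd μ (fun q : Fin 4 → ℝ => pd 2 u q) p :=
    fun μ => pd_mul (diff_coord 2 p) (hpdu 2 p) μ
  have hq3l : ∀ μ : Fin 4, pd μ (fun q : Fin 4 → ℝ => q 3 * pd 3 u q) p
      = pd μ (fun q : Fin 4 → ℝ => q 3) p * pd 3 u p + p 3 * pd μ (fun q : Fin 4 → ℝ => pd 3 u q) p :=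
    fun μ => pd_mul (diff_coord 3 p) (hpdu 3 p) μ
  have hIt0 : pd 0 (fun q : Fin 4 → ℝ => -(A (q 0) * B (q 0) * C (q 0) / N (q 0)) * Real.exp (2 * q 1) * pd 0 u q * Q q) p
      = pd 0 (fun q : Fin 4 → ℝ => -(A (q 0) * B (q 0) * C (q 0) / N (q 0)) * Real.exp (2 * q 1) * pd 0 u q) p * Q p + (-(A (p 0) * B (p 0) * C (p 0) / N (p 0)) * Real.exp (2 * p 1) * pd 0 u p) * pd 0 Q p :=
    pd_mul dK0 dQ 0
  have hIxs : pd 1 (fun q : Fin 4 → ℝ => (N (q 0) * B (q 0) * C (q 0) / A (q 0)) * Real.exp (2 * q 1) * pd 1 u q * Q q - L q) p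
      = pd 1 (fun q : Fin 4 → ℝ => (N (q 0) * B (q 0) * C (q 0) / A (q 0)) * Real.exp (2 * q 1) * pd 1 u q * Q q) p - pd 1 L p :=
    pd_sub (dK1.mul dQ) dL 1
  have hIxm : pd 1 (fun q : Fin 4 → ℝ => (N (q 0) * B (q 0) * C (q 0) / A (q 0)) * Real.exp (2 * q 1) * pd 1 u q * Q q) p
      = pd 1 (fun q : Fin 4 → ℝ => (N (q 0) * B (q 0) * C (q 0) / A (q 0)) * Real.exp (2 * q 1) * pd 1 u q) p * Q p + ((N (p 0) * B (p 0) * C (p 0) / A (p 0)) * Real.exp (2 * p 1) * pd 1 u p) * pd 1 Q p :=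
    pd_mul dK1 dQ 1
  have hIys : pd 2 (fun q : Fin 4 → ℝ => (N (q 0) * A (q 0) * C (q 0) / B (q 0)) * pd 2 u q * Q q + q 2 * L q) p
      = pd 2 (fun q : Fin 4 → ℝ => (N (q 0) * A (q 0) * C (q 0) / B (q 0)) * pd 2 u q * Q q) p + pd 2 (fun q : Fin 4 → ℝ => q 2 * L q) p :=
    pd_add (dK2.mul dQ) ((diff_coord 2 p).mul dL) 2
  have hIym : pd 2 (fun q : Fin 4 → ℝ => (N (q 0) * A (q 0) * C (q 0) / B (q 0)) * pd 2 u q * Q q) p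
      = pd 2 (fun q : Fin 4 → ℝ => (N (q 0) * A (q 0) * C (q 0) / B (q 0)) * pd 2 u q) p * Q p + ((N (p 0) * A (p 0) * C (p 0) / B (p 0)) * pd 2 u p) * pd 2 Q p :=
    pd_mul dK2 dQ 2
  have hIyl : pd 2 (fun q : Fin 4 → ℝ => q 2 * L q) p
      = pd 2 (fun q : Fin 4 → ℝ => q 2) p * L p + p 2 * pd 2 L p :=
    pd_mul (diff_coord 2 p) dL 2
  have hIzs : pd 3 (fun q : Fin 4 → ℝ => (N (q 0) * A (q 0) * B (q 0) / C (q 0)) * pd 3 u q * Q q + q 3 * L q) p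
      = pd 3 (fun q : Fin 4 → ℝ => (N (q 0) * A (q 0) * B (q 0) / C (q 0)) * pd 3 u q * Q q) p + pd 3 (fun q : Fin 4 → ℝ => q 3 * L q) p :=
    pd_add (dK3.mul dQ) ((diff_coord 3 p).mul dL) 3
  have hIzm : pd 3 (fun q : Fin 4 → ℝ => (N (q 0) * A (q 0) * B (q 0) / C (q 0)) * pd 3 u q * Q q) p
      = pd 3 (fun q : Fin 4 → ℝ => (N (q 0) * A (q 0) * B (q 0) / C (q 0)) * pd 3 u q) p * Q p + ((N (p 0) * A (p 0) * B (p 0) / C (p 0)) * pd 3 u p) * pd 3 Q p :=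
    pd_mul dK3 dQ 3
  have hIzl : pd 3 (fun q : Fin 4 → ℝ => q 3 * L q) p
      = pd 3 (fun q : Fin 4 → ℝ => q 3) p * L p + p 3 * pd 3 L p :=
    pd_mul (diff_coord 3 p) dL 3
  have hKGp := hKG p
  rw [hIt, hIx, hIy, hIz]
  rw [hIt0, hIxs, hIxm, hIys, hIym, hIyl, hIzs, hIzm, hIzl]
  simp only [hLpd, hLval, hpdLp, hpdS12345, hpdS1234, hpdS123, hpdS12, hpdT1, hpdT2, hpdT3,
    hpdT4, hpdT5, hpdcSEV, hpdc0E, hpdc1E, hpdcSE, hpdc0, hpdc1, hpdc2, hpdc3, hpdcS,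
    hpdsq0, hpdsq1, hpdsq2, hpdsq3, hpduu, hQs1, hQs2, hq2l, hq3l, pd_coord, pd_exp2]
  simp only [hsym 1 0, hsym 2 0, hsym 3 0, hsym 2 1, hsym 3 1, hsym 3 2]
  simp (config := { decide := true }) at hKGp ⊢
  have hQval : Q p = pd 1 u p - p 2 * pd 2 u p - p 3 * pd 3 u p := by rw [hQ]
  linear_combination (Q p) * hKGp
    + (N (p 0) * A (p 0) * B (p 0) * C (p 0) * Real.exp (2 * p 1) * V p * u p) * hQval
    - (N (p 0) * A (p 0) * B (p 0) * C (p 0) * Real.exp (2 * p 1) * (u p * u p) / 2) * hVinv
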